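/- arXiv:1101.1605 — 9 statements merged into one kernel-verified Lean document; each statement's English description precedes it below -/
import Mathlib

section
/- Let v, G, ψ : ℝ → ℝ be smooth functions. Define the Schrödinger operator L by Lψ = ψ'' + vψ, the Lenard operators KG = (1/4)G''' + (1/2)(v·G' + (v·G)') and JG = G', and the operator V by Vψ = -(1/4)G'·ψ + (1/2)G·ψ'. Then for every smooth ψ the commutator identity [V, L]ψ = V(Lψ) - L(Vψ) = (KG)·ψ - (JG)·(Lψ) holds pointwise on ℝ. -/
/-- For the Schrödinger operator `L ψ = ψ'' + v ψ`, the Lenard operators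
`K G = (1/4) G''' + (1/2)(v G' + (v G)')`, `J G = G'`, and the operator
`V ψ = -(1/4) G' ψ + (1/2) G ψ'`, the commutator identity
`[V, L] ψ = V (L ψ) - L (V ψ) = (K G) ψ - (J G) (L ψ)` holds pointwise on ℝ. -/
theorem negKdV_operator_equation
    (v G ψ : ℝ → ℝ)
    (hv : ContDiff ℝ (⊤ : ℕ∞) v) (hG : ContDiff ℝ (⊤ : ℕ∞) G)
    (hψ : ContDiff ℝ (⊤ : ℕ∞) ψ) :
    let L : (ℝ → ℝ) → (ℝ → ℝ) := fun f x => deriv (deriv f) x + v x * f x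
    let K : (ℝ → ℝ) → (ℝ → ℝ) := fun f x =>
      (1/4) * deriv (deriv (deriv f)) x
        + (1/2) * (v x * deriv f x + deriv (fun y => v y * f y) x)
    let J : (ℝ → ℝ) → (ℝ → ℝ) := fun f x => deriv f x
    let V : (ℝ → ℝ) → (ℝ → ℝ) := fun f x =>
      -(1/4) * deriv G x * f x + (1/2) * G x * deriv f x
    ∀ x : ℝ, V (L ψ) x - L (V ψ) x = K G x * ψ x - J G x * L ψ x := by
  intro L K J V x
  have hv' : Differentiable ℝ v := hv.differentiable (by simp)
  have hG' : Differentiable ℝ G := hG.differentiable (by simp)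
  have hψ' : Differentiable ℝ ψ := hψ.differentiable (by simp)
  have hG1 : ContDiff ℝ (⊤ : ℕ∞) (deriv G) := (contDiff_infty_iff_deriv.mp hG).2
  have hG1' : Differentiable ℝ (deriv G) := hG1.differentiable (by simp)
  have hG2 : ContDiff ℝ (⊤ : ℕ∞) (deriv (deriv G)) := (contDiff_infty_iff_deriv.mp hG1).2
  have hG2' : Differentiable ℝ (deriv (deriv G)) := hG2.differentiable (by simp)
  have hψ1 : ContDiff ℝ (⊤ : ℕ∞) (deriv ψ) := (contDiff_infty_iff_deriv.mp hψ).2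
  have hψ1' : Differentiable ℝ (deriv ψ) := hψ1.differentiable (by simp)
  have hψ2 : ContDiff ℝ (⊤ : ℕ∞) (deriv (deriv ψ)) := (contDiff_infty_iff_deriv.mp hψ1).2
  have hψ2' : Differentiable ℝ (deriv (deriv ψ)) := hψ2.differentiable (by simp)
  have E1 : deriv (fun y => v y * ψ y) = fun y => deriv v y * ψ y + v y * deriv ψ y :=
    funext fun y => deriv_fun_mul (hv' y) (hψ' y)
  have E2 : deriv (fun x => deriv (deriv ψ) x + v x * ψ x)
      = fun x => deriv (deriv (deriv ψ)) x + (deriv v x * ψ x + v x * deriv ψ x) := by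
    funext y
    rw [deriv_fun_add (hψ2' y) ((hv'.fun_mul hψ') y), deriv_fun_mul (hv' y) (hψ' y)]
  have E3 : deriv (fun x => -(1/4) * deriv G x * ψ x + 1/2 * G x * deriv ψ x)
      = fun x => (-(1/4) * deriv (deriv G) x * ψ x + -(1/4) * deriv G x * deriv ψ x)
        + (1/2 * deriv G x * deriv ψ x + 1/2 * G x * deriv (deriv ψ) x) := by
    funext y
    rw [deriv_fun_add (((hG1'.const_mul _).fun_mul hψ') y) (((hG'.const_mul _).fun_mul hψ1') y),
      deriv_fun_mul ((hG1'.const_mul _) y) (hψ' y),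
      deriv_fun_mul ((hG'.const_mul _) y) (hψ1' y),
      deriv_const_mul _ (hG1' y), deriv_const_mul _ (hG' y)]
  have E4 : deriv (fun x => (-(1/4) * deriv (deriv G) x * ψ x + -(1/4) * deriv G x * deriv ψ x)
        + (1/2 * deriv G x * deriv ψ x + 1/2 * G x * deriv (deriv ψ) x))
      = fun x => ((-(1/4) * deriv (deriv (deriv G)) x * ψ x + -(1/4) * deriv (deriv G) x * deriv ψ x)
          + (-(1/4) * deriv (deriv G) x * deriv ψ x + -(1/4) * deriv G x * deriv (deriv ψ) x))
        + ((1/2 * deriv (deriv G) x * deriv ψ x + 1/2 * deriv G x * deriv (deriv ψ) x)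
          + (1/2 * deriv G x * deriv (deriv ψ) x + 1/2 * G x * deriv (deriv (deriv ψ)) x)) := by
    funext y
    rw [deriv_fun_add
        ((((hG2'.const_mul _).fun_mul hψ').fun_add ((hG1'.const_mul _).fun_mul hψ1')) y)
        ((((hG1'.const_mul _).fun_mul hψ1').fun_add ((hG'.const_mul _).fun_mul hψ2')) y),
      deriv_fun_add (((hG2'.const_mul _).fun_mul hψ') y) (((hG1'.const_mul _).fun_mul hψ1') y),
      deriv_fun_add (((hG1'.const_mul _).fun_mul hψ1') y) (((hG'.const_mul _).fun_mul hψ2') y),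
      deriv_fun_mul ((hG2'.const_mul _) y) (hψ' y),
      deriv_fun_mul ((hG1'.const_mul _) y) (hψ1' y),
      deriv_fun_mul ((hG1'.const_mul _) y) (hψ1' y),
      deriv_fun_mul ((hG'.const_mul _) y) (hψ2' y),
      deriv_const_mul _ (hG2' y), deriv_const_mul _ (hG1' y), deriv_const_mul _ (hG1' y),
      deriv_const_mul _ (hG' y)]
  have E5 : deriv (fun y => v y * G y) x = deriv v x * G x + v x * deriv G x :=
    deriv_fun_mul (hv' x) (hG' x)
  simp only [L, K, J, V, E1, E2, E3, E4, E5]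
  ring
end

section
/- Let u : ℝ → ℝ be smooth and nonvanishing, and set v = -u''/u. Then the Hamiltonian operator K factorizes as K = (1/4) u⁻² ∂ u² ∂ u² ∂ u⁻²; explicitly, for every smooth G : ℝ → ℝ, (1/4)G''' + (1/2)(v·G' + (v·G)') = (1/4) u⁻² · ( u² · ( u² · (u⁻²·G)' )' )' pointwise on ℝ. -/
/-- With `v = -u''/u` (`u` smooth and nonvanishing), the Hamiltonian
operator `K` factorizes as `K = (1/4) u⁻² ∂ u² ∂ u² ∂ u⁻²`:
`(1/4) G''' + (1/2)(v G' + (v G)') = (1/4) u⁻² (u² (u² (u⁻² G)')')'` pointwise on ℝ. -/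
theorem hamiltonian_operator_K_factorization
    (u : ℝ → ℝ) (hu : ContDiff ℝ (⊤ : ℕ∞) u) (hu0 : ∀ x : ℝ, u x ≠ 0)
    (v : ℝ → ℝ) (hv : ∀ x : ℝ, v x = -(deriv (deriv u) x) / u x) :
    ∀ (G : ℝ → ℝ), ContDiff ℝ (⊤ : ℕ∞) G →
      ∀ x : ℝ,
        (1/4) * deriv (deriv (deriv G)) x
          + (1/2) * (v x * deriv G x + deriv (fun y => v y * G y) x)
        = (1/4) * (u x ^ 2)⁻¹ *
            deriv (fun y => u y ^ 2 *
              deriv (fun z => u z ^ 2 *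
                deriv (fun w => (u w ^ 2)⁻¹ * G w) z) y) x := by
  intro G hG x
  have huD : ContDiff ℝ (⊤ : ℕ∞) (deriv u) := (contDiff_infty_iff_deriv.mp hu).2
  have huDD : ContDiff ℝ (⊤ : ℕ∞) (deriv (deriv u)) := (contDiff_infty_iff_deriv.mp huD).2
  have hGD : ContDiff ℝ (⊤ : ℕ∞) (deriv G) := (contDiff_infty_iff_deriv.mp hG).2
  have hGDD : ContDiff ℝ (⊤ : ℕ∞) (deriv (deriv G)) := (contDiff_infty_iff_deriv.mp hGD).2
  have hu' : ∀ y, HasDerivAt u (deriv u y) y :=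
    fun y => (hu.differentiable (by simp) y).hasDerivAt
  have hu'' : ∀ y, HasDerivAt (deriv u) (deriv (deriv u) y) y :=
    fun y => (huD.differentiable (by simp) y).hasDerivAt
  have hu''' : ∀ y, HasDerivAt (deriv (deriv u)) (deriv (deriv (deriv u)) y) y :=
    fun y => (huDD.differentiable (by simp) y).hasDerivAt
  have hG' : ∀ y, HasDerivAt G (deriv G y) y :=
    fun y => (hG.differentiable (by simp) y).hasDerivAt
  have hG'' : ∀ y, HasDerivAt (deriv G) (deriv (deriv G) y) y :=
    fun y => (hGD.differentiable (by simp) y).hasDerivAt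
  -- innermost derivative
  have step1 : ∀ w, deriv (fun w => (u w ^ 2)⁻¹ * G w) w
      = -(2 * u w * deriv u w) / (u w ^ 2) ^ 2 * G w + (u w ^ 2)⁻¹ * deriv G w := by
    intro w
    have h := (((hu' w).pow 2).inv (pow_ne_zero 2 (hu0 w))).mul (hG' w)
    rw [show (fun w => (u w ^ 2)⁻¹ * G w) = (u ^ 2)⁻¹ * G from rfl, h.deriv]
    simp only [Pi.pow_apply, Pi.inv_apply]; push_cast; ring
  have step2 : (fun z => u z ^ 2 * deriv (fun w => (u w ^ 2)⁻¹ * G w) z)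
      = fun z => -2 * deriv u z * G z * (u z)⁻¹ + deriv G z := by
    funext z
    rw [step1 z]
    field_simp [hu0 z]
  have step3 : ∀ z, deriv (fun z => -2 * deriv u z * G z * (u z)⁻¹ + deriv G z) z
      = ((-2 * deriv (deriv u) z) * G z + (-2 * deriv u z) * deriv G z) * (u z)⁻¹
        + (-2 * deriv u z * G z) * (-(deriv u z) / u z ^ 2) + deriv (deriv G) z := by
    intro z
    have h := ((((hu'' z).const_mul (-2 : ℝ)).mul (hG' z)).mul ((hu' z).inv (hu0 z))).add
      (hG'' z)
    exact h.deriv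
  have step4 : (fun y => u y ^ 2 *
        deriv (fun z => -2 * deriv u z * G z * (u z)⁻¹ + deriv G z) y)
      = fun y => -2 * (deriv (deriv u) y * u y - deriv u y ^ 2) * G y
          - 2 * deriv u y * u y * deriv G y + u y ^ 2 * deriv (deriv G) y := by
    funext y
    rw [step3 y]
    field_simp [hu0 y]
    ring
  have step5 : deriv (fun y => -2 * (deriv (deriv u) y * u y - deriv u y ^ 2) * G y
          - 2 * deriv u y * u y * deriv G y + u y ^ 2 * deriv (deriv G) y) x
      = -2 * (deriv (deriv (deriv u)) x * u x + deriv (deriv u) x * deriv u x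
            - 2 * deriv u x ^ 1 * deriv (deriv u) x) * G x
        + -2 * (deriv (deriv u) x * u x - deriv u x ^ 2) * deriv G x
        - ((2 * deriv (deriv u) x * u x + 2 * deriv u x * deriv u x) * deriv G x
            + 2 * deriv u x * u x * deriv (deriv G) x)
        + (2 * u x ^ 1 * deriv u x * deriv (deriv G) x
            + u x ^ 2 * deriv (deriv (deriv G)) x) := by
    have hG''' : HasDerivAt (deriv (deriv G)) (deriv (deriv (deriv G)) x) x :=
      (hGDD.differentiable (by simp) x).hasDerivAt
    have hA := ((((hu''' x).mul (hu' x)).sub ((hu'' x).pow 2)).const_mul (-2 : ℝ)).mul (hG' x)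
    have hB := (((hu'' x).const_mul (2 : ℝ)).mul (hu' x)).mul (hG'' x)
    have hC := ((hu' x).pow 2).mul hG'''
    have h' := (hA.sub hB).add hC
    erw [h'.deriv]
    simp only [Pi.mul_apply, Pi.sub_apply, Pi.pow_apply]
    push_cast
    ring
  have hvfun : v = fun y => -deriv (deriv u) y / u y := funext hv
  have stepL : deriv (fun y => v y * G y) x
      = ((-deriv (deriv (deriv u)) x * u x - -deriv (deriv u) x * deriv u x) / u x ^ 2) * G x
        + (-deriv (deriv u) x / u x) * deriv G x := by
    rw [hvfun]
    have h := (((hu''' x).neg.div (hu' x) (hu0 x))).mul (hG' x)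
    exact h.deriv
  simp only [step2, step4]
  rw [step5, stepL, hv x]
  have hx := hu0 x
  field_simp
  ring_nf
end

section
/- Let u, w : ℝ → ℝ be smooth with u nonvanishing, suppose w' = u⁻², and set v = -u''/u. Then G = u²·w lies in the kernel of the operator K, i.e. (1/4)(u²w)''' + (1/2)(v·(u²w)' + (v·u²w)') = 0 pointwise on ℝ. -/
/-- With `v = -u''/u` (`u` smooth and nonvanishing) and `w' = u⁻²`,
the function `G = u² w` lies in the kernel of `K`:
`(1/4)(u²w)''' + (1/2)(v (u²w)' + (v u²w)') = 0` pointwise on ℝ. -/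
theorem u_sq_w_in_kernel_K
    (u w : ℝ → ℝ) (hu : ContDiff ℝ (⊤ : ℕ∞) u) (hw : ContDiff ℝ (⊤ : ℕ∞) w)
    (hu0 : ∀ x : ℝ, u x ≠ 0)
    (hw' : ∀ x : ℝ, deriv w x = (u x ^ 2)⁻¹)
    (v : ℝ → ℝ) (hv : ∀ x : ℝ, v x = -(deriv (deriv u) x) / u x) :
    ∀ x : ℝ,
      (1/4) * deriv (deriv (deriv (fun y => u y ^ 2 * w y))) x
        + (1/2) * (v x * deriv (fun y => u y ^ 2 * w y) x
            + deriv (fun y => v y * (u y ^ 2 * w y)) x) = 0 := by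
  have hu1 : ContDiff ℝ (⊤ : ℕ∞) (deriv u) := (contDiff_infty_iff_deriv.mp hu).2
  have hu2 : ContDiff ℝ (⊤ : ℕ∞) (deriv (deriv u)) := (contDiff_infty_iff_deriv.mp hu1).2
  have hU : ∀ x, HasDerivAt u (deriv u x) x :=
    fun x => (hu.differentiable (by simp) x).hasDerivAt
  have hU1 : ∀ x, HasDerivAt (deriv u) (deriv (deriv u) x) x :=
    fun x => (hu1.differentiable (by simp) x).hasDerivAt
  have hU2 : ∀ x, HasDerivAt (deriv (deriv u)) (deriv (deriv (deriv u)) x) x :=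
    fun x => (hu2.differentiable (by simp) x).hasDerivAt
  have hW : ∀ x, HasDerivAt w ((u x ^ 2)⁻¹) x :=
    fun x => hw' x ▸ (hw.differentiable (by simp) x).hasDerivAt
  -- first derivative of G = u² w
  have h1 : ∀ x, HasDerivAt (fun y => u y ^ 2 * w y) (2 * u x * deriv u x * w x + 1) x := by
    intro x
    have h := ((hU x).pow 2).mul (hW x)
    refine h.congr_deriv ?_
    try simp only [Pi.pow_apply, Pi.mul_apply, Pi.add_apply, Pi.div_apply, Pi.neg_apply]
    try field_simp [hu0 x]
    try ring
  have h1d : deriv (fun y => u y ^ 2 * w y) = fun x => 2 * u x * deriv u x * w x + 1 :=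
    funext fun x => (h1 x).deriv
  -- second derivative
  have h2 : ∀ x, HasDerivAt (fun y => 2 * u y * deriv u y * w y + 1)
      ((2 * deriv u x * deriv u x + 2 * u x * deriv (deriv u) x) * w x
        + 2 * deriv u x / u x) x := by
    intro x
    have h := ((((hU x).const_mul 2).mul (hU1 x)).mul (hW x)).add_const 1
    refine h.congr_deriv ?_
    try simp only [Pi.pow_apply, Pi.mul_apply, Pi.add_apply, Pi.div_apply, Pi.neg_apply]
    try field_simp [hu0 x]
    try ring
  have h2d : deriv (deriv (fun y => u y ^ 2 * w y)) =
      fun x => (2 * deriv u x * deriv u x + 2 * u x * deriv (deriv u) x) * w x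
        + 2 * deriv u x / u x := by
    rw [h1d]; exact funext fun x => (h2 x).deriv
  -- third derivative
  have h3 : ∀ x, HasDerivAt
      (fun y => (2 * deriv u y * deriv u y + 2 * u y * deriv (deriv u) y) * w y
        + 2 * deriv u y / u y)
      ((6 * deriv u x * deriv (deriv u) x + 2 * u x * deriv (deriv (deriv u)) x) * w x
        + 4 * deriv (deriv u) x / u x) x := by
    intro x
    have h := (((((hU1 x).const_mul 2).mul (hU1 x)).add
        (((hU x).const_mul 2).mul (hU2 x))).mul (hW x)).add
        (((hU1 x).const_mul 2).div (hU x) (hu0 x))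
    refine h.congr_deriv ?_
    try simp only [Pi.pow_apply, Pi.mul_apply, Pi.add_apply, Pi.div_apply, Pi.neg_apply]
    try field_simp [hu0 x]
    try ring
  have h3d : deriv (deriv (deriv (fun y => u y ^ 2 * w y))) =
      fun x => (6 * deriv u x * deriv (deriv u) x + 2 * u x * deriv (deriv (deriv u)) x) * w x
        + 4 * deriv (deriv u) x / u x := by
    rw [h2d]; exact funext fun x => (h3 x).deriv
  -- derivative of v·G
  have hvG : (fun y => v y * (u y ^ 2 * w y)) = fun y => -(deriv (deriv u) y) * (u y * w y) := by
    funext y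
    rw [hv y]
    field_simp [hu0 y]
  have h4 : ∀ x, HasDerivAt (fun y => -(deriv (deriv u) y) * (u y * w y))
      (-(deriv (deriv (deriv u)) x) * (u x * w x)
        + -(deriv (deriv u) x) * (deriv u x * w x + 1 / u x)) x := by
    intro x
    have h := (hU2 x).neg.mul ((hU x).mul (hW x))
    refine h.congr_deriv ?_
    try simp only [Pi.pow_apply, Pi.mul_apply, Pi.add_apply, Pi.div_apply, Pi.neg_apply]
    try field_simp [hu0 x]
    try ring
  have h4d : deriv (fun y => v y * (u y ^ 2 * w y)) =
      fun x => -(deriv (deriv (deriv u)) x) * (u x * w x)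
        + -(deriv (deriv u) x) * (deriv u x * w x + 1 / u x) := by
    rw [hvG]; exact funext fun x => (h4 x).deriv
  intro x
  rw [h3d, h4d, h1d, hv x]
  field_simp [hu0 x]
  ring
end

section
/- Let u, w, z : ℝ → ℝ be smooth with u nonvanishing, suppose w' = u⁻² and z' = u⁻²·w, and set v = -u''/u. Then G = u²·z lies in the kernel of the operator K, i.e. (1/4)(u²z)''' + (1/2)(v·(u²z)' + (v·u²z)') = 0 pointwise on ℝ. -/
/-- With `v = -u''/u` (`u` smooth and nonvanishing), `w' = u⁻²` and
`z' = u⁻² w`, the function `G = u² z` lies in the kernel of `K`: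
`(1/4)(u²z)''' + (1/2)(v (u²z)' + (v u²z)') = 0` pointwise on ℝ. -/
theorem u_sq_z_in_kernel_K
    (u w z : ℝ → ℝ) (hu : ContDiff ℝ (⊤ : ℕ∞) u) (hw : ContDiff ℝ (⊤ : ℕ∞) w)
    (hz : ContDiff ℝ (⊤ : ℕ∞) z)
    (hu0 : ∀ x : ℝ, u x ≠ 0)
    (hw' : ∀ x : ℝ, deriv w x = (u x ^ 2)⁻¹)
    (hz' : ∀ x : ℝ, deriv z x = (u x ^ 2)⁻¹ * w x)
    (v : ℝ → ℝ) (hv : ∀ x : ℝ, v x = -(deriv (deriv u) x) / u x) :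
    ∀ x : ℝ,
      (1/4) * deriv (deriv (deriv (fun y => u y ^ 2 * z y))) x
        + (1/2) * (v x * deriv (fun y => u y ^ 2 * z y) x
            + deriv (fun y => v y * (u y ^ 2 * z y)) x) = 0 := by
  have hud : Differentiable ℝ u := hu.differentiable (by norm_num)
  have hu'c : ContDiff ℝ (⊤ : ℕ∞) (deriv u) := (contDiff_infty_iff_deriv.mp hu).2
  have hu'd : Differentiable ℝ (deriv u) := hu'c.differentiable (by norm_num)
  have hu''d : Differentiable ℝ (deriv (deriv u)) :=
    ((contDiff_infty_iff_deriv.mp hu'c).2).differentiable (by norm_num)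
  have hwd : Differentiable ℝ w := hw.differentiable (by norm_num)
  have hzd : Differentiable ℝ z := hz.differentiable (by norm_num)
  -- pointwise HasDerivAt facts
  have hu1 : ∀ x, HasDerivAt u (deriv u x) x := fun x => (hud x).hasDerivAt
  have hu'1 : ∀ x, HasDerivAt (deriv u) (deriv (deriv u) x) x := fun x => (hu'd x).hasDerivAt
  have hu''1 : ∀ x, HasDerivAt (deriv (deriv u)) (deriv (deriv (deriv u)) x) x :=
    fun x => (hu''d x).hasDerivAt
  have hw1 : ∀ x, HasDerivAt w ((u x ^ 2)⁻¹) x := fun x => hw' x ▸ (hwd x).hasDerivAt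
  have hz1 : ∀ x, HasDerivAt z ((u x ^ 2)⁻¹ * w x) x := fun x => hz' x ▸ (hzd x).hasDerivAt
  -- first derivative of G
  have hG1 : ∀ x, HasDerivAt (fun y => u y ^ 2 * z y)
      (2 * (u x * deriv u x * z x) + w x) x := by
    intro x
    have h := (hu1 x).pow 2 |>.mul (hz1 x)
    convert h using 1 <;> try rfl
    have h0 := hu0 x
    field_simp
    simp only [Pi.pow_apply]; ring
  have hDG : deriv (fun y => u y ^ 2 * z y)
      = fun x => 2 * (u x * deriv u x * z x) + w x := funext fun x => (hG1 x).deriv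
  -- second derivative
  have hg1 : ∀ x, HasDerivAt (fun y => 2 * (u y * deriv u y * z y) + w y)
      (2 * ((deriv u x * deriv u x + u x * deriv (deriv u) x) * z x
        + u x * deriv u x * ((u x ^ 2)⁻¹ * w x)) + (u x ^ 2)⁻¹) x := fun x =>
    ((((hu1 x).mul (hu'1 x)).mul (hz1 x)).const_mul 2).add (hw1 x)
  have hDg1 : deriv (fun x => 2 * (u x * deriv u x * z x) + w x)
      = fun x => 2 * ((deriv u x * deriv u x + u x * deriv (deriv u) x) * z x
        + u x * deriv u x * ((u x ^ 2)⁻¹ * w x)) + (u x ^ 2)⁻¹ :=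
    funext fun x => (hg1 x).deriv
  intro x
  have h0 : u x ≠ 0 := hu0 x
  have hpow : u x ^ 2 ≠ 0 := pow_ne_zero 2 h0
  have hinv : HasDerivAt (fun y => (u y ^ 2)⁻¹)
      (-((2 : ℕ) * u x ^ (2 - 1) * deriv u x) / (u x ^ 2) ^ 2) x :=
    ((hu1 x).pow 2).inv hpow
  -- third derivative at x
  have hg2 := ((((((hu'1 x).mul (hu'1 x)).add ((hu1 x).mul (hu''1 x))).mul (hz1 x)).add
      (((hu1 x).mul (hu'1 x)).mul (hinv.mul (hw1 x)))).const_mul 2).add hinv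
  have h3 : deriv (fun x => 2 * ((deriv u x * deriv u x + u x * deriv (deriv u) x) * z x + u x * deriv u x * ((u x ^ 2)⁻¹ * w x)) + (u x ^ 2)⁻¹) x = _ := hg2.deriv
  -- the v * G term
  have hvfun : (fun y => v y * (u y ^ 2 * z y))
      = fun y => -(deriv (deriv u) y * (u y * z y)) := by
    funext y
    rw [hv y]
    field_simp [hu0 y]
  have hDv : deriv (fun y => -(deriv (deriv u) y * (u y * z y))) x = _ := (((hu''1 x).mul ((hu1 x).mul (hz1 x))).neg).deriv
  rw [hDG, hDg1, h3, hvfun, hDv, hv x]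
  simp only [Pi.mul_apply, Pi.add_apply, Pi.pow_apply]
  field_simp
  ring
end

section
/- Let u : ℝ × ℝ → ℝ be smooth and nonvanishing, set v = -u_xx/u, and suppose u satisfies the negative-order KdV equation v_t = 2u·u_x. Assume moreover that v_x is nonvanishing on an open set Ω ⊆ ℝ × ℝ. Then on Ω the function v satisfies ( v_{txx}/v_x )_x + 4( v·v_t/v_x )_x + 2v_t = 0. -/
open Filter

private lemma aux2 (U u1 u2 u3 : ℝ → ℝ) (hU : ContDiff ℝ (⊤ : ℕ∞) U)
    (h1 : u1 = deriv U) (h2 : u2 = deriv u1) (h3 : u3 = deriv u2)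
    (hU0 : ∀ y, U y ≠ 0) (VT : ℝ → ℝ) (hVT : ∀ y, VT y = 2 * U y * u1 y)
    (S : Set ℝ) (hS : IsOpen S)
    (hne : ∀ y ∈ S, deriv (fun z => -(u2 z) / U z) y ≠ 0)
    (x₀ : ℝ) (hx : x₀ ∈ S) :
    deriv (fun y => deriv (deriv VT) y / deriv (fun z => -(u2 z) / U z) y) x₀
      + 4 * deriv (fun y => -(u2 y) / U y * VT y / deriv (fun z => -(u2 z) / U z) y) x₀
      + 2 * VT x₀ = 0 := by
  have hu1 : ContDiff ℝ (⊤ : ℕ∞) u1 := by rw [h1]; exact (contDiff_infty_iff_deriv.mp hU).2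
  have hu2 : ContDiff ℝ (⊤ : ℕ∞) u2 := by rw [h2]; exact (contDiff_infty_iff_deriv.mp hu1).2
  have hu3 : ContDiff ℝ (⊤ : ℕ∞) u3 := by rw [h3]; exact (contDiff_infty_iff_deriv.mp hu2).2
  have hdU : Differentiable ℝ U := hU.differentiable (by simp)
  have hd1 : Differentiable ℝ u1 := hu1.differentiable (by simp)
  have hd2 : Differentiable ℝ u2 := hu2.differentiable (by simp)
  have hd3 : Differentiable ℝ u3 := hu3.differentiable (by simp)
  have dU : ∀ y, HasDerivAt U (u1 y) y := by rw [h1]; exact fun y => (hdU y).hasDerivAt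
  have d1 : ∀ y, HasDerivAt u1 (u2 y) y := by rw [h2]; exact fun y => (hd1 y).hasDerivAt
  have d2 : ∀ y, HasDerivAt u2 (u3 y) y := by rw [h3]; exact fun y => (hd2 y).hasDerivAt
  -- derivative of V = -(u2)/U
  have dV : ∀ y, HasDerivAt (fun z => -(u2 z) / U z)
      ((-(u3 y) * U y - -(u2 y) * u1 y) / U y ^ 2) y :=
    fun y => ((d2 y).neg).div (dU y) (hU0 y)
  have hVXeq : deriv (fun z => -(u2 z) / U z)
      = fun y => (-(u3 y) * U y - -(u2 y) * u1 y) / U y ^ 2 := funext fun y => (dV y).deriv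
  -- derivatives of VT
  have hVTfun : VT = fun z => 2 * U z * u1 z := funext hVT
  have dVT : ∀ y, HasDerivAt VT (2 * u1 y * u1 y + 2 * U y * u2 y) y := by
    rw [hVTfun]; exact fun y => ((dU y).const_mul 2).mul (d1 y)
  have hVTd : deriv VT = fun y => 2 * u1 y * u1 y + 2 * U y * u2 y :=
    funext fun y => (dVT y).deriv
  have dVT2 : ∀ y, HasDerivAt (deriv VT)
      (2 * u2 y * u1 y + 2 * u1 y * u2 y + (2 * u1 y * u2 y + 2 * U y * u3 y)) y := by
    rw [hVTd]
    exact fun y => (((d1 y).const_mul 2).mul (d1 y)).add (((dU y).const_mul 2).mul (d2 y))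
  have hN : ∀ y, deriv (deriv VT) y
      = 2 * u2 y * u1 y + 2 * u1 y * u2 y + (2 * u1 y * u2 y + 2 * U y * u3 y) :=
    fun y => (dVT2 y).deriv
  -- differentiability of the pieces
  have hdVX : Differentiable ℝ (deriv (fun z => -(u2 z) / U z)) := by
    rw [hVXeq]
    exact ((hd3.neg.mul hdU).sub (hd2.neg.mul hd1)).div (hdU.pow 2)
      (fun y => pow_ne_zero 2 (hU0 y))
  have hdN : Differentiable ℝ (deriv (deriv VT)) := by
    rw [funext hN]
    exact (((hd2.const_mul 2).mul hd1).add ((hd1.const_mul 2).mul hd2)).add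
      (((hd1.const_mul 2).mul hd2).add ((hdU.const_mul 2).mul hd3))
  have hdV : Differentiable ℝ (fun z => -(u2 z) / U z) := hd2.neg.div hdU hU0
  have hdVT : Differentiable ℝ VT := by
    rw [hVTfun]; exact (hdU.const_mul 2).mul hd1
  have hvx0 : deriv (fun z => -(u2 z) / U z) x₀ ≠ 0 := hne x₀ hx
  have hF : DifferentiableAt ℝ
      (fun y => deriv (deriv VT) y / deriv (fun z => -(u2 z) / U z) y) x₀ :=
    (hdN x₀).div (hdVX x₀) hvx0
  have hG : DifferentiableAt ℝ
      (fun y => -(u2 y) / U y * VT y / deriv (fun z => -(u2 z) / U z) y) x₀ :=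
    ((hdV x₀).mul (hdVT x₀)).div (hdVX x₀) hvx0
  -- the combined function equals -2 U^2 near x₀
  have heq' : (fun y => deriv (deriv VT) y / deriv (fun z => -(u2 z) / U z) y
        + 4 * (-(u2 y) / U y * VT y / deriv (fun z => -(u2 z) / U z) y))
      =ᶠ[nhds x₀] fun y => -2 * U y ^ 2 := by
    filter_upwards [hS.mem_nhds hx] with y hy
    have hvx := hne y hy
    have hE : -(u3 y) * U y - -(u2 y) * u1 y ≠ 0 := by
      intro h
      rw [(dV y).deriv, h, zero_div] at hvx
      exact hvx rfl
    rw [(dV y).deriv] at hvx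
    rw [hN y, hVT y, (dV y).deriv, ← mul_div_assoc, ← add_div, div_eq_iff hvx]
    field_simp [hU0 y]
    ring
  have hd2U : HasDerivAt (fun y => -2 * U y ^ 2) (-2 * (2 * U x₀ * u1 x₀)) x₀ := by
    have h := ((dU x₀).pow 2).const_mul (-2)
    norm_num at h
    convert h using 1 <;> first | rfl | (funext y; ring) | ring
  have hsum : deriv (fun y => deriv (deriv VT) y / deriv (fun z => -(u2 z) / U z) y
        + 4 * (-(u2 y) / U y * VT y / deriv (fun z => -(u2 z) / U z) y)) x₀
      = -2 * (2 * U x₀ * u1 x₀) := by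
    rw [heq'.deriv_eq]; exact hd2U.deriv
  rw [deriv_fun_add hF (hG.const_mul 4), deriv_const_mul 4 hG] at hsum
  rw [hVT x₀]
  linarith [hsum]



/-- If `u : ℝ × ℝ → ℝ` is smooth and nonvanishing, `v = -u_xx/u`
satisfies the negative-order KdV equation `v_t = 2 u u_x`, and `v_x` is
nonvanishing on an open set `Ω`, then on `Ω` the function `v` satisfies
`(v_txx/v_x)_x + 4 (v v_t/v_x)_x + 2 v_t = 0`. -/
theorem negKdV_to_fuchssteiner_equation
    (u : ℝ × ℝ → ℝ) (hu : ContDiff ℝ (⊤ : ℕ∞) u)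
    (hu0 : ∀ p : ℝ × ℝ, u p ≠ 0) :
    let v : ℝ → ℝ → ℝ := fun x t => -(deriv (deriv (fun y => u (y, t))) x) / u (x, t)
    let vt : ℝ → ℝ → ℝ := fun x t => deriv (fun s => v x s) t
    let vx : ℝ → ℝ → ℝ := fun x t => deriv (fun y => v y t) x
    let vtxx : ℝ → ℝ → ℝ := fun x t => deriv (deriv (fun y => vt y t)) x
    ∀ (Ω : Set (ℝ × ℝ)), IsOpen Ω →
      (∀ (x t : ℝ), vt x t = 2 * u (x, t) * deriv (fun y => u (y, t)) x) →
      (∀ p ∈ Ω, vx p.1 p.2 ≠ 0) →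
      ∀ p ∈ Ω,
        deriv (fun y => vtxx y p.2 / vx y p.2) p.1
          + 4 * deriv (fun y => v y p.2 * vt y p.2 / vx y p.2) p.1
          + 2 * vt p.1 p.2 = 0 := by
  intro v vt vx vtxx Ω hΩ heq hne p hp
  exact aux2 (fun y => u (y, p.2)) (deriv (fun y => u (y, p.2)))
    (deriv (deriv (fun y => u (y, p.2)))) (deriv (deriv (deriv (fun y => u (y, p.2)))))
    (hu.comp (contDiff_id.prodMk contDiff_const)) rfl rfl rfl
    (fun y => hu0 (y, p.2)) (fun y => vt y p.2) (fun y => heq y p.2)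
    {y : ℝ | (y, p.2) ∈ Ω} (hΩ.preimage (continuous_id.prodMk continuous_const))
    (fun y hy => hne (y, p.2) hy) p.1 hp
end

section
/- Let c > 0 and ξ₀ ∈ ℝ, and define u(x,t) = -√(2c)/(x - ct + ξ₀) (respectively u(x,t) = +√(2c)/(x - ct + ξ₀)). Then on the open set { (x,t) : x - ct + ξ₀ ≠ 0 }, u is smooth, nonvanishing, and satisfies the negative-order KdV equation (-u_xx/u)_t = 2u·u_x. Moreover u is unbounded as x - ct → -ξ₀. -/
-- derivative of A/(y - cs + ξ₀) in y, at a nonsingular point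
private lemma hd1 (A k : ℝ) {x : ℝ} (hx : x + k ≠ 0) :
    HasDerivAt (fun y : ℝ => A / (y + k)) (-A / (x + k) ^ 2) x := by
  have h := (hasDerivAt_const x A).div ((hasDerivAt_id x).add_const k) hx
  replace h : HasDerivAt (fun y : ℝ => A / (y + k)) _ x := h
  convert h using 1
  simp [neg_div]

private lemma hd1' (A k : ℝ) {x : ℝ} (hx : x + k ≠ 0) :
    deriv (fun y : ℝ => A / (y + k)) =ᶠ[nhds x] (fun y => -A / (y + k) ^ 2) := by
  have hopen : IsOpen {y : ℝ | y + k ≠ 0} :=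
    isOpen_ne.preimage (by continuity)
  filter_upwards [hopen.mem_nhds hx] with y hy
  exact (hd1 A k hy).deriv

private lemma hd2 (A k : ℝ) {x : ℝ} (hx : x + k ≠ 0) :
    deriv (deriv (fun y : ℝ => A / (y + k))) x = 2 * A / (x + k) ^ 3 := by
  rw [(hd1' A k hx).deriv_eq]
  have hg : HasDerivAt (fun y : ℝ => (y + k) ^ 2) (2 * (x + k)) x := by
    have := ((hasDerivAt_id x).add_const k).pow 2
    have this' : HasDerivAt (fun y : ℝ => (y + k) ^ 2) _ x := this
    simpa using this'
  have h := (hasDerivAt_const x (-A)).div hg (pow_ne_zero 2 hx)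
  replace h : HasDerivAt (fun y : ℝ => -A / (y + k) ^ 2) _ x := h
  rw [h.deriv]
  field_simp
  ring

/-- For `c > 0` and any `ξ₀`, the functions
`u(x,t) = ∓√(2c)/(x - ct + ξ₀)` are smooth, nonvanishing, and satisfy the
negative-order KdV equation `(-u_xx/u)_t = 2 u u_x` on the open set where
`x - ct + ξ₀ ≠ 0`; moreover `u` is unbounded as `x - ct → -ξ₀`. -/
theorem unbounded_breaking_wave_solutions
    (c : ℝ) (hc : 0 < c) (ξ₀ : ℝ) (ε : ℝ) (hε : ε = -1 ∨ ε = 1) :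
    let u : ℝ → ℝ → ℝ := fun x t => ε * Real.sqrt (2 * c) / (x - c * t + ξ₀)
    let S : Set (ℝ × ℝ) := {p | p.1 - c * p.2 + ξ₀ ≠ 0}
    IsOpen S
    ∧ ContDiffOn ℝ (⊤ : ℕ∞) (fun p : ℝ × ℝ => u p.1 p.2) S
    ∧ (∀ p ∈ S, u p.1 p.2 ≠ 0)
    ∧ (∀ p ∈ S,
        deriv (fun s => -(deriv (deriv (fun y => u y s)) p.1) / u p.1 s) p.2
          = 2 * u p.1 p.2 * deriv (fun y => u y p.2) p.1)
    ∧ (∀ t : ℝ, Filter.Tendsto (fun x => |u x t|)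
        (nhdsWithin (c * t - ξ₀) {x | x ≠ c * t - ξ₀}) Filter.atTop) := by
  intro u S
  set A : ℝ := ε * Real.sqrt (2 * c) with hA
  have hsq : Real.sqrt (2 * c) ^ 2 = 2 * c := Real.sq_sqrt (by linarith)
  have hε2 : ε ^ 2 = 1 := by rcases hε with h | h <;> simp [h]
  have hA2 : A ^ 2 = 2 * c := by rw [hA, mul_pow, hε2, hsq, one_mul]
  have hAne : A ≠ 0 := by
    intro h
    rw [h] at hA2; simp at hA2; linarith
  have hcont : Continuous fun p : ℝ × ℝ => p.1 - c * p.2 + ξ₀ := by continuity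
  have hSopen : IsOpen S := isOpen_ne.preimage hcont
  refine ⟨hSopen, ?_, ?_, ?_, ?_⟩
  · exact ContDiffOn.div contDiffOn_const (((contDiff_fst.sub (contDiff_const.mul contDiff_snd)).add contDiff_const).contDiffOn) fun p hp => hp
  · intro p hp
    exact div_ne_zero hAne hp
  · intro p hp
    have hd : p.1 - c * p.2 + ξ₀ ≠ 0 := hp
    -- eventual formula in s near p.2
    have hopen : IsOpen {s : ℝ | p.1 - c * s + ξ₀ ≠ 0} :=
      isOpen_ne.preimage (by continuity)
    have hev : (fun s => -(deriv (deriv (fun y => u y s)) p.1) / u p.1 s)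
        =ᶠ[nhds p.2] (fun s => -2 / (p.1 - c * s + ξ₀) ^ 2) := by
      filter_upwards [hopen.mem_nhds hd] with s hs
      have hrw : (fun y => u y s) = fun y => A / (y + (ξ₀ - c * s)) := by
        funext y; show A / (y - c * s + ξ₀) = _; ring_nf
      have hx : p.1 + (ξ₀ - c * s) ≠ 0 := by
        intro h; apply hs; linarith
      have h2 := hd2 A (ξ₀ - c * s) hx
      rw [hrw, h2]
      show -(2 * A / (p.1 + (ξ₀ - c * s)) ^ 3) / (A / (p.1 - c * s + ξ₀)) = _
      have hds : p.1 - c * s + ξ₀ = p.1 + (ξ₀ - c * s) := by ring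
      rw [hds]
      field_simp
    rw [hev.deriv_eq]
    have hg : HasDerivAt (fun s : ℝ => (p.1 - c * s + ξ₀) ^ 2)
        (2 * (p.1 - c * p.2 + ξ₀) * (-c)) p.2 := by
      have hl : HasDerivAt (fun s : ℝ => p.1 - c * s + ξ₀) (-c) p.2 := by
        have := ((hasDerivAt_id p.2).const_mul c).const_sub p.1
        simpa using this.add_const ξ₀
      have hl2 : HasDerivAt (fun s : ℝ => (p.1 - c * s + ξ₀) ^ 2) _ p.2 := hl.pow 2
      simpa [mul_comm] using hl2
    have h := (hasDerivAt_const p.2 (-2 : ℝ)).div hg (pow_ne_zero 2 hd)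
    replace h : HasDerivAt (fun s : ℝ => -2 / (p.1 - c * s + ξ₀) ^ 2) _ p.2 := h
    rw [h.deriv]
    -- RHS
    have hrw2 : (fun y => u y p.2) = fun y => A / (y + (ξ₀ - c * p.2)) := by
      funext y; show A / (y - c * p.2 + ξ₀) = _; ring_nf
    have hx2 : p.1 + (ξ₀ - c * p.2) ≠ 0 := by intro h'; apply hd; linarith
    rw [hrw2, (hd1 A (ξ₀ - c * p.2) hx2).deriv]
    show (0 * (p.1 - c * p.2 + ξ₀) ^ 2 - -2 * (2 * (p.1 - c * p.2 + ξ₀) * -c)) /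
        ((p.1 - c * p.2 + ξ₀) ^ 2) ^ 2
      = 2 * (A / (p.1 - c * p.2 + ξ₀)) * (-A / (p.1 + (ξ₀ - c * p.2)) ^ 2)
    have hds : p.1 + (ξ₀ - c * p.2) = p.1 - c * p.2 + ξ₀ := by ring
    rw [hds]
    field_simp
    nlinarith [hA2, sq_nonneg (p.1 - c * p.2 + ξ₀)]
  · intro t
    have hApos : 0 < |A| := abs_pos.mpr hAne
    have h1 : Filter.Tendsto (fun x : ℝ => |x - c * t + ξ₀|)
        (nhdsWithin (c * t - ξ₀) {x | x ≠ c * t - ξ₀}) (nhdsWithin 0 (Set.Ioi 0)) := by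
      apply Filter.Tendsto.inf
      · have : Continuous fun x : ℝ => |x - c * t + ξ₀| := by continuity
        have h0 := this.tendsto (c * t - ξ₀)
        simpa using h0
      · rw [Filter.tendsto_principal]
        filter_upwards [Filter.eventually_mem_set.mpr (Filter.mem_principal_self _)] with x hx
        have : x - c * t + ξ₀ ≠ 0 := fun h => hx (by linarith)
        exact abs_pos.mpr this
    have h2 : Filter.Tendsto (fun y : ℝ => |A| * y⁻¹) (nhdsWithin 0 (Set.Ioi 0))
        Filter.atTop :=
      (tendsto_inv_nhdsGT_zero).const_mul_atTop hApos
    have h3 := h2.comp h1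
    refine h3.congr fun x => ?_
    show |A| * |x - c * t + ξ₀|⁻¹ = |A / (x - c * t + ξ₀)|
    rw [abs_div, div_eq_mul_inv]
end

section
/- Let c > 0, g > 0, A ∈ ℝ, ξ₀ ∈ ℝ, and define U(ξ) = 8Acg / ( A²·e^{√g·(ξ+ξ₀)} - 8cg·e^{-√g·(ξ+ξ₀)} ). Then on every open interval where the denominator A²·e^{√g(ξ+ξ₀)} - 8cg·e^{-√g(ξ+ξ₀)} is nonzero, U satisfies U'' = g·U + U³/c, and hence u(x,t) = U(x - ct) satisfies the negative-order KdV equation (-u_xx/u)_t = 2u·u_x wherever additionally U ≠ 0. -/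
noncomputable def Dfun (c g A ξ₀ : ℝ) : ℝ → ℝ := fun ξ =>
  A ^ 2 * Real.exp (Real.sqrt g * (ξ + ξ₀))
    - 8 * c * g * Real.exp (-(Real.sqrt g * (ξ + ξ₀)))

noncomputable def Efun (c g A ξ₀ : ℝ) : ℝ → ℝ := fun ξ =>
  A ^ 2 * Real.exp (Real.sqrt g * (ξ + ξ₀))
    + 8 * c * g * Real.exp (-(Real.sqrt g * (ξ + ξ₀)))

noncomputable def Ufun (c g A ξ₀ : ℝ) : ℝ → ℝ := fun ξ => 8 * A * c * g / Dfun c g A ξ₀ ξ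

lemma hDE (c g A ξ₀ : ℝ) (ξ : ℝ) :
    HasDerivAt (Dfun c g A ξ₀) (Real.sqrt g * Efun c g A ξ₀ ξ) ξ := by
  set s := Real.sqrt g
  have h1 : HasDerivAt (fun ξ : ℝ => s * (ξ + ξ₀)) s ξ := by
    simpa using ((hasDerivAt_id ξ).add_const ξ₀).const_mul s
  have h2 := (Real.hasDerivAt_exp (s * (ξ + ξ₀))).comp ξ h1
  have h3 := (Real.hasDerivAt_exp (-(s * (ξ + ξ₀)))).comp ξ h1.neg
  have h := (h2.const_mul (A ^ 2)).sub (h3.const_mul (8 * c * g))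
  convert h using 1 <;> try rfl
  simp [Efun]; ring

lemma hED (c g A ξ₀ : ℝ) (ξ : ℝ) :
    HasDerivAt (Efun c g A ξ₀) (Real.sqrt g * Dfun c g A ξ₀ ξ) ξ := by
  set s := Real.sqrt g
  have h1 : HasDerivAt (fun ξ : ℝ => s * (ξ + ξ₀)) s ξ := by
    simpa using ((hasDerivAt_id ξ).add_const ξ₀).const_mul s
  have h2 := (Real.hasDerivAt_exp (s * (ξ + ξ₀))).comp ξ h1
  have h3 := (Real.hasDerivAt_exp (-(s * (ξ + ξ₀)))).comp ξ h1.neg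
  have h := (h2.const_mul (A ^ 2)).add (h3.const_mul (8 * c * g))
  convert h using 1 <;> try rfl
  simp [Dfun]; ring

lemma hEsq (c g A ξ₀ : ℝ) (ξ : ℝ) :
    Efun c g A ξ₀ ξ ^ 2 = Dfun c g A ξ₀ ξ ^ 2 + 32 * A ^ 2 * c * g := by
  have h : Real.exp (Real.sqrt g * (ξ + ξ₀)) * Real.exp (-(Real.sqrt g * (ξ + ξ₀))) = 1 := by
    rw [← Real.exp_add]; simp
  simp only [Efun, Dfun]
  nlinarith [h]

lemma hUder (c g A ξ₀ : ℝ) (ξ : ℝ) (hD : Dfun c g A ξ₀ ξ ≠ 0) :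
    HasDerivAt (Ufun c g A ξ₀)
      (-(8 * A * c * g * (Real.sqrt g * Efun c g A ξ₀ ξ)) / Dfun c g A ξ₀ ξ ^ 2) ξ := by
  have h := (hasDerivAt_const ξ (8 * A * c * g)).div (hDE c g A ξ₀ ξ) hD
  convert h using 1 <;> try rfl
  ring

noncomputable def Vfun (c g A ξ₀ : ℝ) : ℝ → ℝ := fun ξ =>
  -(8 * A * c * g * (Real.sqrt g * Efun c g A ξ₀ ξ)) / Dfun c g A ξ₀ ξ ^ 2

lemma hVder (c g A ξ₀ : ℝ) (ξ : ℝ) (hD : Dfun c g A ξ₀ ξ ≠ 0) :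
    HasDerivAt (Vfun c g A ξ₀)
      (((-(8 * A * c * g * (Real.sqrt g * (Real.sqrt g * Dfun c g A ξ₀ ξ)))) * Dfun c g A ξ₀ ξ ^ 2
        - (-(8 * A * c * g * (Real.sqrt g * Efun c g A ξ₀ ξ)))
            * (2 * Dfun c g A ξ₀ ξ ^ 1 * (Real.sqrt g * Efun c g A ξ₀ ξ)))
        / (Dfun c g A ξ₀ ξ ^ 2) ^ 2) ξ := by
  have hnum : HasDerivAt (fun ξ' => -(8 * A * c * g * (Real.sqrt g * Efun c g A ξ₀ ξ')))
      (-(8 * A * c * g * (Real.sqrt g * (Real.sqrt g * Dfun c g A ξ₀ ξ)))) ξ := by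
    have := (((hED c g A ξ₀ ξ).const_mul (Real.sqrt g)).const_mul (8 * A * c * g)).neg
    convert this using 1 <;> try rfl
  have hden : HasDerivAt (fun ξ' => Dfun c g A ξ₀ ξ' ^ 2)
      (2 * Dfun c g A ξ₀ ξ ^ 1 * (Real.sqrt g * Efun c g A ξ₀ ξ)) ξ := (hDE c g A ξ₀ ξ).pow 2
  exact hnum.div hden (pow_ne_zero 2 hD)

lemma Dcont (c g A ξ₀ : ℝ) : Continuous (Dfun c g A ξ₀) := by
  unfold Dfun; fun_prop

lemma part1 (c g A ξ₀ : ℝ) (hc : 0 < c) (hg : 0 < g) (ξ : ℝ)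
    (hD : Dfun c g A ξ₀ ξ ≠ 0) :
    deriv (deriv (Ufun c g A ξ₀)) ξ = g * Ufun c g A ξ₀ ξ + Ufun c g A ξ₀ ξ ^ 3 / c := by
  have hopen : IsOpen {ξ' : ℝ | Dfun c g A ξ₀ ξ' ≠ 0} :=
    isOpen_compl_singleton.preimage (Dcont c g A ξ₀)
  have hev : deriv (Ufun c g A ξ₀) =ᶠ[nhds ξ] Vfun c g A ξ₀ := by
    filter_upwards [hopen.mem_nhds hD] with a ha using (hUder c g A ξ₀ a ha).deriv
  rw [hev.deriv_eq, (hVder c g A ξ₀ ξ hD).deriv]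
  have hsg : Real.sqrt g * Real.sqrt g = g := Real.mul_self_sqrt hg.le
  have hEq := hEsq c g A ξ₀ ξ
  set d := Dfun c g A ξ₀ ξ
  set e := Efun c g A ξ₀ ξ
  simp only [Ufun]
  change _ = g * (8 * A * c * g / d) + (8 * A * c * g / d) ^ 3 / c
  field_simp
  ring_nf
  linear_combination (2*A*(Real.sqrt g)^2) * hEq
    + (A*(d^2+64*A^2*c*g)) * hsg


lemma part2 (c g A ξ₀ : ℝ) (hc : 0 < c) (hg : 0 < g) (x t : ℝ)
    (hD : Dfun c g A ξ₀ (x - c * t) ≠ 0) (hU0 : Ufun c g A ξ₀ (x - c * t) ≠ 0) :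
    deriv (fun s => -(deriv (deriv (fun y => Ufun c g A ξ₀ (y - c * s))) x)
        / Ufun c g A ξ₀ (x - c * s)) t
      = 2 * Ufun c g A ξ₀ (x - c * t) * deriv (fun y => Ufun c g A ξ₀ (y - c * t)) x := by
  have hA : A ≠ 0 := by
    intro h
    apply hU0
    simp [Ufun, h]
  have hnum : 8 * A * c * g ≠ 0 := by positivity
  have hUne : ∀ ξ, Dfun c g A ξ₀ ξ ≠ 0 → Ufun c g A ξ₀ ξ ≠ 0 := fun ξ h =>
    div_ne_zero hnum h
  have hdd : ∀ s, deriv (deriv (fun y => Ufun c g A ξ₀ (y - c * s))) x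
      = deriv (deriv (Ufun c g A ξ₀)) (x - c * s) := by
    intro s
    have h1 : deriv (fun y => Ufun c g A ξ₀ (y - c * s))
        = fun y => deriv (Ufun c g A ξ₀) (y - c * s) :=
      funext fun y => deriv_comp_sub_const _ _ _
    rw [h1, deriv_comp_sub_const]
  have hopen : IsOpen {s : ℝ | Dfun c g A ξ₀ (x - c * s) ≠ 0} := by
    have : Continuous fun s : ℝ => Dfun c g A ξ₀ (x - c * s) :=
      (Dcont c g A ξ₀).comp (by fun_prop)
    exact isOpen_compl_singleton.preimage this
  have hev : (fun s => -(deriv (deriv (fun y => Ufun c g A ξ₀ (y - c * s))) x)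
        / Ufun c g A ξ₀ (x - c * s))
      =ᶠ[nhds t] fun s => -g - Ufun c g A ξ₀ (x - c * s) ^ 2 / c := by
    filter_upwards [hopen.mem_nhds hD] with a ha
    rw [hdd a, part1 c g A ξ₀ hc hg _ ha]
    have hu := hUne _ ha
    field_simp
    ring
  have hinner : HasDerivAt (fun s : ℝ => x - c * s) (-c) t := by
    simpa using ((hasDerivAt_id t).const_mul c).const_sub x
  set V₀ := -(8 * A * c * g * (Real.sqrt g * Efun c g A ξ₀ (x - c * t)))
      / Dfun c g A ξ₀ (x - c * t) ^ 2 with hV₀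
  have hH : HasDerivAt (fun s => Ufun c g A ξ₀ (x - c * s)) (V₀ * -c) t :=
    HasDerivAt.comp (h₂ := Ufun c g A ξ₀) t (hUder c g A ξ₀ (x - c * t) hD) hinner
  have hG : HasDerivAt (fun s => -g - Ufun c g A ξ₀ (x - c * s) ^ 2 / c)
      (-(2 * Ufun c g A ξ₀ (x - c * t) ^ 1 * (V₀ * -c) / c)) t :=
    ((hH.pow 2).div_const c).const_sub (-g)
  rw [hev.deriv_eq, hG.deriv]
  have hder : deriv (fun y => Ufun c g A ξ₀ (y - c * t)) x = V₀ := by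
    rw [deriv_comp_sub_const, (hUder c g A ξ₀ (x - c * t) hD).deriv]
  rw [hder]
  field_simp

/-- For `c > 0`, `g > 0`, the profile
`U(ξ) = 8Acg / (A² e^{√g(ξ+ξ₀)} - 8cg e^{-√g(ξ+ξ₀)})` satisfies
`U'' = g U + U³/c` wherever the denominator is nonzero, and hence
`u(x,t) = U(x - ct)` satisfies the negative-order KdV equation
`(-u_xx/u)_t = 2 u u_x` wherever additionally `U ≠ 0`. -/
theorem exponential_traveling_wave_solutions
    (c g A ξ₀ : ℝ) (hc : 0 < c) (hg : 0 < g) :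
    let D : ℝ → ℝ := fun ξ =>
      A ^ 2 * Real.exp (Real.sqrt g * (ξ + ξ₀))
        - 8 * c * g * Real.exp (-(Real.sqrt g * (ξ + ξ₀)))
    let U : ℝ → ℝ := fun ξ => 8 * A * c * g / D ξ
    let u : ℝ → ℝ → ℝ := fun x t => U (x - c * t)
    (∀ ξ : ℝ, D ξ ≠ 0 → deriv (deriv U) ξ = g * U ξ + U ξ ^ 3 / c)
    ∧ (∀ x t : ℝ, D (x - c * t) ≠ 0 → U (x - c * t) ≠ 0 →
        deriv (fun s => -(deriv (deriv (fun y => u y s)) x) / u x s) t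
          = 2 * u x t * deriv (fun y => u y t) x) := by
  intro D U u
  exact ⟨fun ξ hξ => part1 c g A ξ₀ hc hg ξ hξ,
    fun x t h1 h2 => part2 c g A ξ₀ hc hg x t h1 h2⟩
end

section
/- Let c < 0 and g > 0, and define u(x,t) = √(2|c|g) · sech( √g · (x - ct) ) (respectively its negative). Then u is smooth, nonvanishing on all of ℝ × ℝ, and satisfies the negative-order KdV equation (-u_xx/u)_t = 2u·u_x; moreover u(x,t) → 0 as |x - ct| → ∞. Thus the equation possesses classical soliton solutions. -/
private lemma sech_deriv1 (A k b : ℝ) (x : ℝ) :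
    HasDerivAt (fun y => A * (Real.cosh (k * (y - b)))⁻¹)
      (-(A * k * Real.sinh (k * (x - b)) / (Real.cosh (k * (x - b))) ^ 2)) x := by
  have h0 : HasDerivAt (fun y : ℝ => k * (y - b)) k x := by
    simpa using ((hasDerivAt_id x).sub_const b).const_mul k
  have h1 := (Real.hasDerivAt_cosh (k * (x - b))).comp x h0
  have h2 := (h1.inv (Real.cosh_pos _).ne').const_mul A
  convert h2 using 1 <;> try rfl
  have hc := (Real.cosh_pos (k * (x - b))).ne'
  simp only [Function.comp]
  field_simp

private lemma sech_deriv2 (A k b : ℝ) (x : ℝ) :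
    HasDerivAt (fun y => -(A * k * Real.sinh (k * (y - b)) / (Real.cosh (k * (y - b))) ^ 2))
      (A * k ^ 2 * (2 * (Real.sinh (k * (x - b))) ^ 2 - (Real.cosh (k * (x - b))) ^ 2)
        / (Real.cosh (k * (x - b))) ^ 3) x := by
  have h0 : HasDerivAt (fun y : ℝ => k * (y - b)) k x := by
    simpa using ((hasDerivAt_id x).sub_const b).const_mul k
  have hs := (Real.hasDerivAt_sinh (k * (x - b))).comp x h0
  have hN : HasDerivAt (fun y => -(A * k * Real.sinh (k * (y - b))))
      (-(A * k * (Real.cosh (k * (x - b)) * k))) x := (hs.const_mul (A * k)).neg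
  have hD : HasDerivAt (fun y => (Real.cosh (k * (y - b))) ^ 2)
      (2 * Real.cosh (k * (x - b)) * (Real.sinh (k * (x - b)) * k)) x := by
    have := ((Real.hasDerivAt_cosh (k * (x - b))).comp x h0).pow 2
    convert this using 1 <;> try rfl
    simp only [Function.comp]
    push_cast
    ring
  have h := hN.div hD (pow_ne_zero 2 (Real.cosh_pos _).ne')
  have hcn := (Real.cosh_pos (k * (x - b))).ne'
  convert h using 1 <;> try rfl
  · funext y; simp only [Pi.div_apply]; ring
  · rw [div_eq_div_iff (pow_ne_zero 3 hcn) (pow_ne_zero 2 (pow_ne_zero 2 hcn))]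
    ring

private lemma sech_deriv3 (k c x t : ℝ) :
    HasDerivAt (fun s => -k ^ 2 + 2 * k ^ 2 * ((Real.cosh (k * (x - c * s)))⁻¹) ^ 2)
      (4 * k ^ 3 * c * Real.sinh (k * (x - c * t)) * ((Real.cosh (k * (x - c * t)))⁻¹) ^ 3) t := by
  have h0 : HasDerivAt (fun s : ℝ => k * (x - c * s)) (-(k * c)) t := by
    have h := (((hasDerivAt_id t).const_mul c).const_sub x).const_mul k
    simpa using h
  have h1 := (Real.hasDerivAt_cosh (k * (x - c * t))).comp t h0
  have h2 := h1.inv (Real.cosh_pos _).ne'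
  have h3 := (h2.pow 2).const_mul (2 * k ^ 2)
  have h4 := h3.const_add (-k ^ 2)
  convert h4 using 1 <;> try rfl
  have hc := (Real.cosh_pos (k * (x - c * t))).ne'
  simp only [Function.comp, Pi.inv_apply]
  field_simp
  norm_num
  field_simp
  ring

/-- For `c < 0`, `g > 0`, the functions
`u(x,t) = ±√(2|c|g) sech(√g (x - ct))` are smooth and nonvanishing on ℝ × ℝ,
satisfy the negative-order KdV equation `(-u_xx/u)_t = 2 u u_x`, and tend to `0`
as `|x - ct| → ∞`: classical soliton solutions. -/
theorem soliton_solutions_negKdV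
    (c g : ℝ) (hc : c < 0) (hg : 0 < g) (ε : ℝ) (hε : ε = 1 ∨ ε = -1) :
    let u : ℝ → ℝ → ℝ := fun x t =>
      ε * Real.sqrt (2 * |c| * g) * (1 / Real.cosh (Real.sqrt g * (x - c * t)))
    ContDiff ℝ (⊤ : ℕ∞) (fun p : ℝ × ℝ => u p.1 p.2)
    ∧ (∀ x t : ℝ, u x t ≠ 0)
    ∧ (∀ x t : ℝ,
        deriv (fun s => -(deriv (deriv (fun y => u y s)) x) / u x s) t
          = 2 * u x t * deriv (fun y => u y t) x)
    ∧ (∀ t : ℝ, Filter.Tendsto (fun x => u x t)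
        (Filter.comap (fun x => |x - c * t|) Filter.atTop) (nhds 0)) := by
  intro u
  set A : ℝ := ε * Real.sqrt (2 * |c| * g) with hA
  set k : ℝ := Real.sqrt g with hkdef
  have hkpos : (0 : ℝ) < k := Real.sqrt_pos.2 hg
  have hk2 : k ^ 2 = g := Real.sq_sqrt hg.le
  have habs : (0 : ℝ) < 2 * |c| * g :=
    mul_pos (mul_pos two_pos (abs_pos.2 hc.ne)) hg
  have hε2 : ε ^ 2 = 1 := by rcases hε with h | h <;> simp [h]
  have hA2 : A ^ 2 = -(2 * c * g) := by
    rw [hA, mul_pow, hε2, one_mul, Real.sq_sqrt habs.le, abs_of_neg hc]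
    ring
  have hAne : A ≠ 0 := by
    rw [hA]
    exact mul_ne_zero (by rcases hε with h | h <;> simp [h])
      (Real.sqrt_pos.2 habs).ne'
  have hu : ∀ x t : ℝ, u x t = A * (Real.cosh (k * (x - c * t)))⁻¹ := by
    intro x t
    simp only [u, one_div, hA, hkdef]
  clear_value A k
  refine ⟨?_, ?_, ?_, ?_⟩
  · -- smoothness
    have hinner : ContDiff ℝ (⊤ : ℕ∞) (fun p : ℝ × ℝ => k * (p.1 - c * p.2)) :=
      contDiff_const.mul (contDiff_fst.sub (contDiff_const.mul contDiff_snd))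
    have hcosh : ContDiff ℝ (⊤ : ℕ∞) (fun p : ℝ × ℝ => Real.cosh (k * (p.1 - c * p.2))) :=
      Real.contDiff_cosh.comp hinner
    have hinv := hcosh.inv (fun p => (Real.cosh_pos _).ne')
    have hres : ContDiff ℝ (⊤ : ℕ∞)
        (fun p : ℝ × ℝ => A * (Real.cosh (k * (p.1 - c * p.2)))⁻¹) :=
      contDiff_const.mul hinv
    convert hres using 2 with p
    rw [hu p.1 p.2]
  · -- nonvanishing
    intro x t
    rw [hu x t]
    exact mul_ne_zero hAne (inv_ne_zero (Real.cosh_pos _).ne')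
  · -- the PDE
    intro x t
    have key : (fun s => -(deriv (deriv (fun y => u y s)) x) / u x s)
        = fun s => -k ^ 2 + 2 * k ^ 2 * ((Real.cosh (k * (x - c * s)))⁻¹) ^ 2 := by
      funext s
      have hfe : (fun y => u y s) = fun y => A * (Real.cosh (k * (y - c * s)))⁻¹ :=
        funext fun y => hu y s
      have hd1 : deriv (fun y => u y s)
          = fun y => -(A * k * Real.sinh (k * (y - c * s)) / (Real.cosh (k * (y - c * s))) ^ 2) := by
        funext y
        rw [hfe]
        exact (sech_deriv1 A k (c * s) y).deriv
      rw [hd1, (sech_deriv2 A k (c * s) x).deriv, hu x s]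
      have hcp := (Real.cosh_pos (k * (x - c * s))).ne'
      rw [Real.sinh_sq]
      field_simp
      ring
    rw [key, (sech_deriv3 k c x t).deriv]
    have hfe : (fun y => u y t) = fun y => A * (Real.cosh (k * (y - c * t)))⁻¹ :=
      funext fun y => hu y t
    rw [hfe, (sech_deriv1 A k (c * t) x).deriv, hu x t]
    have hcp := (Real.cosh_pos (k * (x - c * t))).ne'
    have hAA : A * A = -(2 * c * k ^ 2) := by rw [← sq, hA2, ← hk2]
    field_simp
    linear_combination (2 * Real.sinh (k * (x - c * t))) * hAA
  · -- decay
    intro t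
    have h0 : Filter.Tendsto (fun x : ℝ => |x - c * t|)
        (Filter.comap (fun x => |x - c * t|) Filter.atTop) Filter.atTop :=
      Filter.tendsto_comap
    have h1 : Filter.Tendsto (fun x : ℝ => k * |x - c * t|)
        (Filter.comap (fun x => |x - c * t|) Filter.atTop) Filter.atTop :=
      h0.const_mul_atTop hkpos
    have hcosh_top : Filter.Tendsto Real.cosh Filter.atTop Filter.atTop := by
      refine Filter.tendsto_atTop_mono (fun y => ?_)
        (Real.tendsto_exp_atTop.atTop_div_const two_pos)
      rw [Real.cosh_eq]
      have := Real.exp_pos (-y)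
      linarith
    have h2 := hcosh_top.comp h1
    have h3 := h2.inv_tendsto_atTop
    have h4 := h3.const_mul A
    rw [mul_zero] at h4
    convert h4 using 2 with x
    rw [hu x t, ← Real.cosh_abs (k * (x - c * t)), abs_mul, abs_of_pos hkpos]
    simp [Function.comp]
end

section
/- Let g < 0 and c > 0, and define u(x,t) = √(c|g|) · tanh( √(|g|/2) · (x - ct) ) (respectively its negative). Then u is smooth on ℝ × ℝ, nonvanishing on the set { (x,t) : x ≠ ct }, and satisfies the negative-order KdV equation (-u_xx/u)_t = 2u·u_x there; moreover u(x,t) → ±√(c|g|) as x - ct → ±∞. Thus the equation possesses kink and anti-kink wave solutions. -/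
open Real Filter

lemma myHasDerivAt_tanh (x : ℝ) :
    HasDerivAt Real.tanh (1 / Real.cosh x ^ 2) x := by
  have h := (Real.hasDerivAt_sinh x).div (Real.hasDerivAt_cosh x) (Real.cosh_pos x).ne'
  have heq : (fun y => Real.sinh y / Real.cosh y) = Real.tanh :=
    funext fun y => (Real.tanh_eq_sinh_div_cosh y).symm
  rw [← heq]
  refine h.congr_deriv ?_
  have h2 := Real.cosh_sq_sub_sinh_sq x
  field_simp
  nlinarith [h2]

lemma tanh_alt (x : ℝ) :
    Real.tanh x = (1 - Real.exp (-2 * x)) / (1 + Real.exp (-2 * x)) := by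
  rw [Real.tanh_eq_sinh_div_cosh, Real.sinh_eq, Real.cosh_eq,
    show (-2 * x) = (-x) + (-x) by ring, Real.exp_add, Real.exp_neg]
  have h := Real.exp_ne_zero x
  have h2 : (0:ℝ) < Real.exp x := Real.exp_pos x
  have hden : (0:ℝ) < 1 + (Real.exp x)⁻¹ * (Real.exp x)⁻¹ := by positivity
  field_simp

lemma tanh_tendsto_atTop : Tendsto Real.tanh atTop (nhds 1) := by
  have he : Tendsto (fun x : ℝ => Real.exp (-2 * x)) atTop (nhds 0) :=
    Real.tendsto_exp_atBot.comp
      ((tendsto_const_mul_atBot_of_neg (by norm_num : (-2:ℝ) < 0)).mpr tendsto_id)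
  have := ((tendsto_const_nhds (x := (1:ℝ))).sub he).div ((tendsto_const_nhds (x := (1:ℝ))).add he)
    (by norm_num : (1:ℝ) + 0 ≠ 0)
  simp only [sub_zero, add_zero, div_one] at this
  exact this.congr (fun x => (tanh_alt x).symm)

lemma tanh_tendsto_atBot : Tendsto Real.tanh atBot (nhds (-1)) := by
  have h := (tanh_tendsto_atTop.comp tendsto_neg_atBot_atTop).neg
  simp only [Function.comp] at h
  refine h.congr (fun x => ?_)
  rw [← Real.tanh_neg, neg_neg]

lemma tanh_ne_zero' {x : ℝ} (hx : x ≠ 0) : Real.tanh x ≠ 0 := by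
  rw [Real.tanh_eq_sinh_div_cosh]
  exact div_ne_zero (Real.sinh_ne_zero.mpr hx) (Real.cosh_pos x).ne'

lemma contDiff_tanh : ContDiff ℝ (⊤ : ℕ∞) Real.tanh := by
  have heq : Real.tanh = fun y => Real.sinh y / Real.cosh y :=
    funext fun y => Real.tanh_eq_sinh_div_cosh y
  rw [heq]
  exact Real.contDiff_sinh.div Real.contDiff_cosh (fun x => (Real.cosh_pos x).ne')

lemma hda_mul_tanh {φ : ℝ → ℝ} {d : ℝ} {z : ℝ} (A : ℝ) (hφ : HasDerivAt φ d z) :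
    HasDerivAt (fun w => A * Real.tanh (φ w)) (A * d / Real.cosh (φ z) ^ 2) z := by
  have h := ((myHasDerivAt_tanh (φ z)).comp z hφ).const_mul A
  refine h.congr_deriv ?_
  ring

lemma hda_mul_inv_cosh_sq {φ : ℝ → ℝ} {d : ℝ} {z : ℝ} (A : ℝ) (hφ : HasDerivAt φ d z) :
    HasDerivAt (fun w => A * (Real.cosh (φ w) ^ 2)⁻¹)
      (-2 * A * d * Real.sinh (φ z) / Real.cosh (φ z) ^ 3) z := by
  have h1 : HasDerivAt (fun w => Real.cosh (φ w)) (Real.sinh (φ z) * d) z :=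
    (Real.hasDerivAt_cosh (φ z)).comp z hφ
  have h2 := (h1.pow 2).inv (by positivity : Real.cosh (φ z) ^ 2 ≠ 0)
  have h3 := h2.const_mul A
  refine h3.congr_deriv ?_
  have hc : Real.cosh (φ z) ≠ 0 := (Real.cosh_pos (φ z)).ne'
  simp only [Pi.pow_apply]
  field_simp
  ring



/-- For `g < 0`, `c > 0`, the functions
`u(x,t) = ±√(c|g|) tanh(√(|g|/2) (x - ct))` are smooth on ℝ × ℝ, nonvanishing on
`{(x,t) : x ≠ ct}`, satisfy the negative-order KdV equation
`(-u_xx/u)_t = 2 u u_x` there, and tend to `±√(c|g|)` as `x - ct → ±∞`: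
kink and anti-kink wave solutions. -/
theorem kink_solutions_negKdV
    (c g : ℝ) (hg : g < 0) (hc : 0 < c) (ε : ℝ) (hε : ε = 1 ∨ ε = -1) :
    let u : ℝ → ℝ → ℝ := fun x t =>
      ε * Real.sqrt (c * |g|) * Real.tanh (Real.sqrt (|g| / 2) * (x - c * t))
    ContDiff ℝ (⊤ : ℕ∞) (fun p : ℝ × ℝ => u p.1 p.2)
    ∧ (∀ x t : ℝ, x ≠ c * t → u x t ≠ 0)
    ∧ (∀ x t : ℝ, x ≠ c * t →
        deriv (fun s => -(deriv (deriv (fun y => u y s)) x) / u x s) t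
          = 2 * u x t * deriv (fun y => u y t) x)
    ∧ (∀ t : ℝ, Filter.Tendsto (fun x => u x t) Filter.atTop
        (nhds (ε * Real.sqrt (c * |g|))))
    ∧ (∀ t : ℝ, Filter.Tendsto (fun x => u x t) Filter.atBot
        (nhds (-(ε * Real.sqrt (c * |g|))))) := by
  intro u
  have hgabs : (0:ℝ) < |g| := abs_pos.mpr hg.ne
  have hag : 0 < c * |g| := mul_pos hc hgabs
  have ha : 0 < Real.sqrt (c * |g|) := Real.sqrt_pos.mpr hag
  have hk : 0 < Real.sqrt (|g| / 2) := Real.sqrt_pos.mpr (by positivity)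
  set a := Real.sqrt (c * |g|)
  set k := Real.sqrt (|g| / 2)
  have ha2 : a ^ 2 = c * |g| := Real.sq_sqrt hag.le
  have hk2 : k ^ 2 = |g| / 2 := Real.sq_sqrt (by positivity)
  have hε2 : ε ^ 2 = 1 := by rcases hε with h | h <;> simp [h]
  have hεne : ε ≠ 0 := by rcases hε with h | h <;> simp [h]
  -- derivative in y of u · s at any point
  have hd1 : ∀ s y : ℝ, HasDerivAt (fun y => u y s)
      (ε * a * k / Real.cosh (k * (y - c * s)) ^ 2) y := by
    intro s y
    have hinner : HasDerivAt (fun y : ℝ => k * (y - c * s)) k y := by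
      simpa using ((hasDerivAt_id y).sub_const (c * s)).const_mul k
    exact hda_mul_tanh (ε * a) hinner
  have hderiv1 : ∀ s : ℝ, deriv (fun y => u y s)
      = fun y => ε * a * k * (Real.cosh (k * (y - c * s)) ^ 2)⁻¹ := by
    intro s
    funext y
    rw [(hd1 s y).deriv, div_eq_mul_inv]
  refine ⟨?_, ?_, ?_, ?_, ?_⟩
  · show ContDiff ℝ (⊤ : ℕ∞) fun p : ℝ × ℝ => ε * a * Real.tanh (k * (p.1 - c * p.2))
    exact contDiff_const.mul (contDiff_tanh.comp
      (contDiff_const.mul (contDiff_fst.sub (contDiff_const.mul contDiff_snd))))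
  · intro x t hx
    exact mul_ne_zero (mul_ne_zero hεne ha.ne')
      (tanh_ne_zero' (mul_ne_zero hk.ne' (sub_ne_zero.mpr hx)))
  · intro x t hx
    -- second derivative in y
    have hd2 : ∀ s : ℝ, HasDerivAt (fun y => ε * a * k * (Real.cosh (k * (y - c * s)) ^ 2)⁻¹)
        (-2 * (ε * a * k) * k * Real.sinh (k * (x - c * s)) / Real.cosh (k * (x - c * s)) ^ 3) x := by
      intro s
      have hinner : HasDerivAt (fun y : ℝ => k * (y - c * s)) k x := by
        simpa using ((hasDerivAt_id x).sub_const (c * s)).const_mul k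
      exact hda_mul_inv_cosh_sq (ε * a * k) hinner
    -- pointwise simplification of -(u_xx)/u for x ≠ c s
    have hkey : ∀ s : ℝ, x ≠ c * s →
        -(deriv (deriv (fun y => u y s)) x) / u x s
          = 2 * k ^ 2 * (Real.cosh (k * (x - c * s)) ^ 2)⁻¹ := by
      intro s hs
      rw [hderiv1 s, (hd2 s).deriv]
      have hθ : k * (x - c * s) ≠ 0 := mul_ne_zero hk.ne' (sub_ne_zero.mpr hs)
      have hS : Real.sinh (k * (x - c * s)) ≠ 0 := Real.sinh_ne_zero.mpr hθ
      have hC : Real.cosh (k * (x - c * s)) ≠ 0 := (Real.cosh_pos _).ne'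
      show -(-2 * (ε * a * k) * k * Real.sinh (k * (x - c * s)) / Real.cosh (k * (x - c * s)) ^ 3)
          / (ε * a * Real.tanh (k * (x - c * s))) = _
      rw [Real.tanh_eq_sinh_div_cosh]
      field_simp
    -- eventual equality near t
    have hev : (fun s => -(deriv (deriv (fun y => u y s)) x) / u x s)
        =ᶠ[nhds t] fun s => 2 * k ^ 2 * (Real.cosh (k * (x - c * s)) ^ 2)⁻¹ := by
      have hct : c * t ≠ x := fun h => hx h.symm
      have hcont : Tendsto (fun s : ℝ => c * s) (nhds t) (nhds (c * t)) :=
        (continuous_const.mul continuous_id).continuousAt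
      filter_upwards [hcont.eventually_ne hct] with s hs
      exact hkey s (fun h => hs h.symm)
    have hinner2 : HasDerivAt (fun s : ℝ => k * (x - c * s)) (-(k * c)) t := by
      have h := (((hasDerivAt_id t).const_mul c).const_sub x).const_mul k
      simpa using h
    have hr := hda_mul_inv_cosh_sq (2 * k ^ 2) hinner2
    rw [hev.deriv_eq, hr.deriv, hderiv1 t]
    show -2 * (2 * k ^ 2) * -(k * c) * Real.sinh (k * (x - c * t)) / Real.cosh (k * (x - c * t)) ^ 3
      = 2 * (ε * a * Real.tanh (k * (x - c * t)))
        * (ε * a * k * (Real.cosh (k * (x - c * t)) ^ 2)⁻¹)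
    set S := Real.sinh (k * (x - c * t))
    have hC : Real.cosh (k * (x - c * t)) ≠ 0 := (Real.cosh_pos _).ne'
    rw [Real.tanh_eq_sinh_div_cosh]
    field_simp
    linear_combination (2 * c * S) * hk2 - (a ^ 2 * S) * hε2 - S * ha2
  · intro t
    have h1 : Tendsto (fun x : ℝ => k * (x - c * t)) atTop atTop :=
      (tendsto_const_mul_atTop_of_pos hk).mpr
        ((tendsto_atTop_add_const_right atTop (-(c * t)) tendsto_id).congr
          (fun x => by simp only [id_eq]; ring))
    have h2 := tanh_tendsto_atTop.comp h1
    have h3 := (tendsto_const_nhds (x := ε * a)).mul h2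
    simpa [mul_one] using h3
  · intro t
    have h1 : Tendsto (fun x : ℝ => k * (x - c * t)) atBot atBot :=
      (tendsto_const_mul_atBot_of_pos hk).mpr
        ((tendsto_atBot_add_const_right atBot (-(c * t)) tendsto_id).congr
          (fun x => by simp only [id_eq]; ring))
    have h2 := tanh_tendsto_atBot.comp h1
    have h3 := (tendsto_const_nhds (x := ε * a)).mul h2
    simpa [mul_neg_one, mul_neg] using h3
end
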